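/- Let G be a finite simple graph on [n] = {1,…,n} such that 1,2,…,n is a perfect elimination order of G^c, and compute set(x_i x_j) = { k ∈ [n] : x_k ∈ (u ∈ G(I(G)) : u >_lex x_i x_j) : x_i x_j } with respect to the decreasing lexicographic order induced by x_1 > ⋯ > x_n. Then for every k ≥ 0, the monomial ideal generated by all products x_i x_j · x_A with {i,j} ∈ E(G), i < j, A ⊆ set(x_i x_j), |A| = k, equals the monomial ideal generated by all x_A x_B where A and B are nonempty subsets of [n] with max A < min B, |A ∪ B| = k + 2, and {max A, b} ∈ E(G) for all b ∈ B. -/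

import Mathlib

open MvPolynomial

/-- The natural ordering `1, 2, …, n` of the vertices is a perfect elimination order of
`H`: for each vertex, its neighbourhood among the later vertices is a clique. -/
def natPEO {n : ℕ} (H : SimpleGraph (Fin n)) : Prop :=
  ∀ i j k : Fin n, i < j → i < k → j ≠ k → H.Adj i j → H.Adj i k → H.Adj j k

/-- The reversed ordering `n, n-1, …, 1` of the vertices is a perfect elimination order of
`H`: for each vertex, its neighbourhood among the earlier-labelled vertices is a clique. -/
def revPEO {n : ℕ} (H : SimpleGraph (Fin n)) : Prop :=
  ∀ i j k : Fin n, j < i → k < i → j ≠ k → H.Adj i j → H.Adj i k → H.Adj j k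
/-- The set of minimal monomial generators of the edge ideal `I(G)` that are strictly
greater than `x_i x_j` (where `i < j`) in the lexicographic order induced by
`x_1 > x_2 > ⋯ > x_n`:  these are the monomials `x_a x_b` with `{a,b} ∈ E(G)`, `a < b`,
and `a < i`, or `a = i` and `b < j`. -/
def lexEarlierEdgeGens (K : Type*) [Field K] {n : ℕ} (G : SimpleGraph (Fin n))
    (i j : Fin n) : Set (MvPolynomial (Fin n) K) :=
  {w | ∃ a b : Fin n, a < b ∧ G.Adj a b ∧ (a < i ∨ (a = i ∧ b < j)) ∧
    w = MvPolynomial.X a * MvPolynomial.X b}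

lemma XmulX {K : Type*} [Field K] {n : ℕ} (a b : Fin n) :
    (MvPolynomial.X a : MvPolynomial (Fin n) K) * MvPolynomial.X b =
      monomial (Finsupp.single a 1 + Finsupp.single b 1) (1 : K) := by
  rw [X, X, monomial_mul, one_mul]

lemma XXX {K : Type*} [Field K] {n : ℕ} (a b c : Fin n) :
    (MvPolynomial.X a : MvPolynomial (Fin n) K) * (MvPolynomial.X b * MvPolynomial.X c) =
      monomial (Finsupp.single a 1 + (Finsupp.single b 1 + Finsupp.single c 1)) (1 : K) := by
  rw [X, X, X, monomial_mul, monomial_mul, one_mul, one_mul]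

lemma lexEarlier_eq_image (K : Type*) [Field K] {n : ℕ} (G : SimpleGraph (Fin n))
    (i j : Fin n) :
    lexEarlierEdgeGens K G i j = (fun s => monomial s (1 : K)) ''
      {m | ∃ a b : Fin n, a < b ∧ G.Adj a b ∧ (a < i ∨ (a = i ∧ b < j)) ∧
        m = Finsupp.single a 1 + Finsupp.single b 1} := by
  ext w
  constructor
  · rintro ⟨a, b, h1, h2, h3, rfl⟩
    exact ⟨_, ⟨a, b, h1, h2, h3, rfl⟩, (XmulX a b).symm⟩
  · rintro ⟨m, ⟨a, b, h1, h2, h3, rfl⟩, rfl⟩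
    exact ⟨a, b, h1, h2, h3, (XmulX a b).symm⟩

lemma colonChar {K : Type*} [Field K] {n : ℕ} (G : SimpleGraph (Fin n))
    {i j : Fin n} (hij : i < j) (k : Fin n) :
    MvPolynomial.X k ∈ (Ideal.span (lexEarlierEdgeGens K G i j)).colon
        ((Ideal.span {MvPolynomial.X i * MvPolynomial.X j} : Ideal (MvPolynomial (Fin n) K)) :
          Set (MvPolynomial (Fin n) K)) ↔
      ((k < i ∧ (G.Adj k i ∨ G.Adj k j)) ∨ (i < k ∧ k < j ∧ G.Adj i k)) := by
  rw [Ideal.mem_colon_span_singleton]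
  constructor
  · intro h
    rw [lexEarlier_eq_image, mem_ideal_span_monomial_image, XXX] at h
    have hsupp : (Finsupp.single k 1 + (Finsupp.single i 1 + Finsupp.single j 1) : Fin n →₀ ℕ)
        ∈ (monomial (Finsupp.single k 1 + (Finsupp.single i 1 + Finsupp.single j 1))
          (1 : K)).support := by
      rw [mem_support_iff, coeff_monomial, if_pos rfl]
      exact one_ne_zero
    obtain ⟨m, ⟨a, b, hab, hadj, hcond, rfl⟩, hle⟩ := h _ hsupp
    have key : ∀ c : Fin n,
        0 < (Finsupp.single a 1 + Finsupp.single b 1 : Fin n →₀ ℕ) c →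
        c = k ∨ c = i ∨ c = j := by
      intro c hc
      rw [Finsupp.add_apply] at hc
      by_contra h'
      push_neg at h'
      have h2 := hle c
      rw [Finsupp.add_apply, Finsupp.add_apply, Finsupp.add_apply,
        Finsupp.single_eq_of_ne h'.1, Finsupp.single_eq_of_ne h'.2.1,
        Finsupp.single_eq_of_ne h'.2.2] at h2
      omega
    have ha : a = k ∨ a = i ∨ a = j := key a (by
      rw [Finsupp.add_apply, Finsupp.single_eq_same]; omega)
    have hb : b = k ∨ b = i ∨ b = j := key b (by
      rw [Finsupp.add_apply, Finsupp.single_eq_same]; omega)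
    rcases ha with rfl | rfl | rfl <;> rcases hb with rfl | rfl | rfl
    · exact absurd hab (lt_irrefl _)
    · exact Or.inl ⟨hab, Or.inl hadj⟩
    · rcases hcond with h | ⟨_, h⟩
      · exact Or.inl ⟨h, Or.inr hadj⟩
      · exact absurd h (lt_irrefl _)
    · rcases hcond with h | ⟨_, h⟩
      · exact absurd h (lt_irrefl _)
      · exact Or.inr ⟨hab, h, hadj⟩
    · exact absurd hab (lt_irrefl _)
    · rcases hcond with h | ⟨_, h⟩
      · exact absurd h (lt_irrefl _)
      · exact absurd h (lt_irrefl _)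
    · rcases hcond with h | ⟨rfl, _⟩
      · exact absurd hij (asymm h)
      · exact absurd hij (lt_irrefl _)
    · exact absurd hab (asymm hij)
    · exact absurd hab (lt_irrefl _)
  · rintro (⟨hki, hAdj | hAdj⟩ | ⟨hik, hkj, hAdj⟩)
    · have hg : (MvPolynomial.X k : MvPolynomial (Fin n) K) * MvPolynomial.X i ∈
          lexEarlierEdgeGens K G i j := ⟨k, i, hki, hAdj, Or.inl hki, rfl⟩
      have : (MvPolynomial.X k : MvPolynomial (Fin n) K) *
          (MvPolynomial.X i * MvPolynomial.X j) =
          (MvPolynomial.X k * MvPolynomial.X i) * MvPolynomial.X j := by ring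
      rw [this]
      exact Ideal.mul_mem_right _ _ (Ideal.subset_span hg)
    · have hg : (MvPolynomial.X k : MvPolynomial (Fin n) K) * MvPolynomial.X j ∈
          lexEarlierEdgeGens K G i j := ⟨k, j, hki.trans hij, hAdj, Or.inl hki, rfl⟩
      have : (MvPolynomial.X k : MvPolynomial (Fin n) K) *
          (MvPolynomial.X i * MvPolynomial.X j) =
          (MvPolynomial.X k * MvPolynomial.X j) * MvPolynomial.X i := by ring
      rw [this]
      exact Ideal.mul_mem_right _ _ (Ideal.subset_span hg)
    · have hg : (MvPolynomial.X i : MvPolynomial (Fin n) K) * MvPolynomial.X k ∈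
          lexEarlierEdgeGens K G i j := ⟨i, k, hik, hAdj, Or.inr ⟨rfl, hkj⟩, rfl⟩
      have : (MvPolynomial.X k : MvPolynomial (Fin n) K) *
          (MvPolynomial.X i * MvPolynomial.X j) =
          (MvPolynomial.X i * MvPolynomial.X k) * MvPolynomial.X j := by ring
      rw [this]
      exact Ideal.mul_mem_right _ _ (Ideal.subset_span hg)

/-- The generating monomials of the `k`-th homological shift ideal `HS_k(I(G))`:
all monomials `x_A x_B` with `A, B` nonempty, `max A < min B`, `|A ∪ B| = k + 2` and
`{max A, b} ∈ E(G)` for all `b ∈ B`. -/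
def HSgens (K : Type*) [Field K] {n : ℕ} (G : SimpleGraph (Fin n)) (k : ℕ) :
    Set (MvPolynomial (Fin n) K) :=
  {w | ∃ A B : Finset (Fin n), A.Nonempty ∧ B.Nonempty ∧
    (∀ a ∈ A, ∀ b ∈ B, a < b) ∧ (A ∪ B).card = k + 2 ∧
    (∃ a0 ∈ A, (∀ a ∈ A, a ≤ a0) ∧ ∀ b ∈ B, G.Adj a0 b) ∧
    w = (∏ i ∈ A, MvPolynomial.X i) * ∏ i ∈ B, MvPolynomial.X i}
/-- **Lemma 2.4 (Ficarra–Herzog), description of `HS_k(I(G))`.**  Let `G` be a graph on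
`Fin n` such that the natural order is a perfect elimination order of `Gᶜ`, and for an
edge `{i,j}` with `i < j` let
`set(x_i x_j) = { k : x_k ∈ (u ∈ G(I(G)) : u >_lex x_i x_j) : x_i x_j }`.  Then for every
`k ≥ 0`, the ideal generated by the monomials `x_i x_j · x_A` with `{i,j} ∈ E(G)`,
`i < j`, `A ⊆ set(x_i x_j)`, `|A| = k`, coincides with the ideal generated by the
monomials `x_A x_B` with `A, B` nonempty, `max A < min B`, `|A ∪ B| = k + 2` and
`{max A, b} ∈ E(G)` for all `b ∈ B`. -/
theorem HS_k_edgeIdeal_description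
    {K : Type*} [Field K] {n : ℕ} (G : SimpleGraph (Fin n))
    (hPEO : natPEO Gᶜ) (k : ℕ) :
    Ideal.span {w : MvPolynomial (Fin n) K | ∃ i j : Fin n, i < j ∧ G.Adj i j ∧
      ∃ A : Finset (Fin n), A.card = k ∧
        (∀ a ∈ A, MvPolynomial.X a ∈ (Ideal.span (lexEarlierEdgeGens K G i j)).colon
          ((Ideal.span {MvPolynomial.X i * MvPolynomial.X j} : Ideal (MvPolynomial (Fin n) K)) :
            Set (MvPolynomial (Fin n) K))) ∧
        w = MvPolynomial.X i * MvPolynomial.X j * ∏ a ∈ A, MvPolynomial.X a} =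
    Ideal.span (HSgens K G k) := by
  apply le_antisymm <;> rw [Ideal.span_le] <;> intro w hw <;> apply Ideal.subset_span
  · -- LHS generator is an HS generator
    obtain ⟨i, j, hij, hadj, A, hcard, hcolon, rfl⟩ := hw
    have hchar : ∀ a ∈ A, (a < i ∧ (G.Adj a i ∨ G.Adj a j)) ∨ (i < a ∧ a < j ∧ G.Adj i a) :=
      fun a ha => (colonChar G hij a).mp (hcolon a ha)
    have hiA : i ∉ A := by
      intro h
      rcases hchar i h with ⟨h', _⟩ | ⟨h', _⟩ <;> exact absurd h' (lt_irrefl _)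
    have hjA : j ∉ A := by
      intro h
      rcases hchar j h with ⟨h', _⟩ | ⟨_, h', _⟩ <;>
        [exact absurd (h'.trans hij) (lt_irrefl _); exact absurd h' (lt_irrefl _)]
    have hjA' : j ∉ insert i A := by
      simp only [Finset.mem_insert]
      rintro (rfl | h)
      · exact absurd hij (lt_irrefl _)
      · exact hjA h
    set S : Finset (Fin n) := insert j (insert i A) with hS
    have hcardS : S.card = k + 2 := by
      rw [hS, Finset.card_insert_of_notMem hjA', Finset.card_insert_of_notMem hiA, hcard]
    set A' : Finset (Fin n) := S.filter (fun s => s ≤ i) with hA'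
    set B' : Finset (Fin n) := S.filter (fun s => ¬ s ≤ i) with hB'
    have hiS : i ∈ S := by simp [hS]
    have hjS : j ∈ S := by simp [hS]
    have hunion : A' ∪ B' = S := Finset.filter_union_filter_not_eq _ S
    have hdisj : Disjoint A' B' := Finset.disjoint_filter_filter_not S S _
    refine ⟨A', B', ⟨i, by simp [hA', hiS]⟩, ⟨j, by rw [hB', Finset.mem_filter]; exact ⟨hjS, not_le.mpr hij⟩⟩,
      ?_, by rw [hunion, hcardS], ⟨i, by simp [hA', hiS], ?_, ?_⟩, ?_⟩
    · intro a ha b hb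
      rw [hA', Finset.mem_filter] at ha
      rw [hB', Finset.mem_filter] at hb
      exact lt_of_le_of_lt ha.2 (not_le.mp hb.2)
    · intro a ha
      rw [hA', Finset.mem_filter] at ha
      exact ha.2
    · intro b hb
      rw [hB', Finset.mem_filter] at hb
      have hib : i < b := not_le.mp hb.2
      have hbS := hb.1
      rw [hS, Finset.mem_insert, Finset.mem_insert] at hbS
      rcases hbS with rfl | rfl | hbA
      · exact hadj
      · exact absurd hib (lt_irrefl _)
      · rcases hchar b hbA with ⟨h', _⟩ | ⟨_, _, h'⟩
        · exact absurd (h'.trans hib) (lt_irrefl _)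
        · exact h'
    · rw [← Finset.prod_union hdisj, hunion, hS, Finset.prod_insert hjA',
        Finset.prod_insert hiA]
      ring
  · -- HS generator is an LHS generator
    obtain ⟨A, B, hA, hB, hlt, hcard, ⟨a0, ha0A, ha0max, ha0adj⟩, rfl⟩ := hw
    set b0 : Fin n := B.max' hB with hb0
    have hb0B : b0 ∈ B := B.max'_mem hB
    have hb0max : ∀ b ∈ B, b ≤ b0 := fun b hb => B.le_max' b hb
    have hab : a0 < b0 := hlt a0 ha0A b0 hb0B
    have hadj0 : G.Adj a0 b0 := ha0adj b0 hb0B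
    have ha0U : a0 ∈ A ∪ B := Finset.mem_union_left _ ha0A
    have hb0U : b0 ∈ (A ∪ B).erase a0 :=
      Finset.mem_erase.mpr ⟨hab.ne', Finset.mem_union_right _ hb0B⟩
    set C : Finset (Fin n) := ((A ∪ B).erase a0).erase b0 with hC
    have hcardC : C.card = k := by
      rw [hC, Finset.card_erase_of_mem hb0U, Finset.card_erase_of_mem ha0U, hcard]
      omega
    refine ⟨a0, b0, hab, hadj0, C, hcardC, ?_, ?_⟩
    · intro a ha
      rw [hC, Finset.mem_erase, Finset.mem_erase] at ha
      obtain ⟨hab0, haa0, haU⟩ := ha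
      apply (colonChar G hab a).mpr
      rw [Finset.mem_union] at haU
      rcases haU with haA | haB
      · have halt : a < a0 := lt_of_le_of_ne (ha0max a haA) haa0
        left
        refine ⟨halt, ?_⟩
        by_contra hcon
        push_neg at hcon
        have h1 : Gᶜ.Adj a a0 := ⟨haa0, hcon.1⟩
        have h2 : Gᶜ.Adj a b0 := ⟨hab0, hcon.2⟩
        have h3 := hPEO a a0 b0 halt (hlt a haA b0 hb0B) hab.ne h1 h2
        exact h3.2 hadj0
      · right
        exact ⟨hlt a0 ha0A a haB, lt_of_le_of_ne (hb0max a haB) hab0, ha0adj a haB⟩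
    · have hdisj : Disjoint A B := by
        rw [Finset.disjoint_left]
        intro a haA haB
        exact absurd (hlt a haA a haB) (lt_irrefl _)
      rw [mul_assoc, Finset.mul_prod_erase _ _ hb0U, Finset.mul_prod_erase _ _ ha0U,
        Finset.prod_union hdisj]
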